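/- arXiv:2601.17392 — 2 statements merged into one kernel-verified Lean document; each statement's English description precedes it below -/
import Mathlib

section
/- Assume S is positive definite and set Ā := S^{1/2} A S^{−1/2}. Then: (i) for every positive semidefinite P ∈ ℝ^{d×d}, 𝓔(P) = S^{−1/2} (Ā (I + S^{1/2} P S^{1/2})⁻¹) S^{1/2} and ‖Ā (I + S^{1/2} P S^{1/2})⁻¹‖₂ ≤ ‖Ā‖₂; (ii) for any positive semidefinite p₀, …, p_n ∈ ℝ^{d×d}, ‖𝓔(p_n) ⋯ 𝓔(p₁) 𝓔(p₀)‖₂ ≤ ‖S^{1/2}‖₂ ‖S^{−1/2}‖₂ ‖Ā‖₂^{n+1}. -/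
open Matrix

noncomputable section

open Classical in
/-- The positive semidefinite square root of a positive semidefinite matrix
(junk value `0` if the matrix is not positive semidefinite). -/
def msqrt {d : ℕ} (M : Matrix (Fin d) (Fin d) ℝ) : Matrix (Fin d) (Fin d) ℝ :=
  if h : M.PosSemidef then
    (h.1.eigenvectorUnitary : Matrix (Fin d) (Fin d) ℝ) *
      diagonal ((↑) ∘ (Real.sqrt ∘ h.1.eigenvalues)) *
      (star h.1.eigenvectorUnitary : Matrix (Fin d) (Fin d) ℝ)
  else 0

/-- The spectral norm (largest singular value) of a real matrix, i.e. the operator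
norm of the induced linear map between Euclidean spaces. -/
def specNorm {m n : ℕ} (M : Matrix (Fin m) (Fin n) ℝ) : ℝ :=
  ‖LinearMap.toContinuousLinearMap (Matrix.toEuclideanLin M)‖

/-- The map `𝓔(P) := A (I + P S)⁻¹`. -/
def Emat {d : ℕ} (A S P : Matrix (Fin d) (Fin d) ℝ) : Matrix (Fin d) (Fin d) ℝ :=
  A * (1 + P * S)⁻¹

/-- The directed product `𝓔(p_n) ⋯ 𝓔(p₁) 𝓔(p₀)`. -/
def Eprod {d : ℕ} (A S : Matrix (Fin d) (Fin d) ℝ) (p : ℕ → Matrix (Fin d) (Fin d) ℝ) :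
    ℕ → Matrix (Fin d) (Fin d) ℝ
  | 0 => Emat A S (p 0)
  | n + 1 => Emat A S (p (n + 1)) * Eprod A S p n

open scoped Matrix.Norms.L2Operator InnerProductSpace

lemma specNorm_eq_l2norm {m n : ℕ} (M : Matrix (Fin m) (Fin n) ℝ) : specNorm M = ‖M‖ := rfl

lemma specNorm_nonneg {m n : ℕ} (M : Matrix (Fin m) (Fin n) ℝ) : 0 ≤ specNorm M :=
  norm_nonneg _

lemma specNorm_mul_le {m n l : ℕ} (A : Matrix (Fin m) (Fin n) ℝ) (B : Matrix (Fin n) (Fin l) ℝ) :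
    specNorm (A * B) ≤ specNorm A * specNorm B := Matrix.l2_opNorm_mul A B

lemma inner_dot {d : ℕ} (x y : EuclideanSpace ℝ (Fin d)) :
    ⟪x, y⟫_ℝ = dotProduct (WithLp.equiv 2 _ x) (WithLp.equiv 2 _ y) := by
  simp [PiLp.inner_apply, dotProduct, mul_comm]

lemma specNorm_inv_le_one {d : ℕ} {Q : Matrix (Fin d) (Fin d) ℝ} (hQ : Q.PosSemidef) :
    specNorm (1 + Q)⁻¹ ≤ 1 := by
  have hT : (1 + Q).PosDef := Matrix.PosDef.add_posSemidef Matrix.PosDef.one hQ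
  have hdet : IsUnit (1 + Q).det := (Matrix.isUnit_iff_isUnit_det _).1 hT.isUnit
  refine ContinuousLinearMap.opNorm_le_bound _ zero_le_one fun x => ?_
  rw [one_mul]
  set y : EuclideanSpace ℝ (Fin d) :=
    LinearMap.toContinuousLinearMap (toEuclideanLin (1+Q)⁻¹) x with hy
  have hTy : toEuclideanLin (1 + Q) y = x := by
    rw [hy]
    show toEuclideanLin (1 + Q) (toEuclideanLin (1+Q)⁻¹ x) = x
    rw [toEuclideanLin_apply, toEuclideanLin_apply]
    simp only [Equiv.apply_symm_apply, mulVec_mulVec, Matrix.mul_nonsing_inv _ hdet, one_mulVec]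
  have h1 : ⟪y, y⟫_ℝ ≤ ⟪y, x⟫_ℝ := by
    rw [← hTy, toEuclideanLin_apply, inner_dot, inner_dot]
    have hQ2 := hQ.dotProduct_mulVec_nonneg (WithLp.equiv 2 _ y)
    simp only [star_trivial, WithLp.equiv, Equiv.coe_fn_mk] at hQ2
    simp only [WithLp.equiv, Equiv.coe_fn_mk, WithLp.ofLp_toLp, Equiv.apply_symm_apply, add_mulVec, one_mulVec, dotProduct_add]
    linarith
  have h2 : ⟪y, x⟫_ℝ ≤ ‖y‖ * ‖x‖ := real_inner_le_norm y x
  have h3 : ⟪y, y⟫_ℝ = ‖y‖ * ‖y‖ := real_inner_self_eq_norm_mul_norm y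
  nlinarith [norm_nonneg y, norm_nonneg x]

lemma msqrt_facts {d : ℕ} (S : Matrix (Fin d) (Fin d) ℝ) (hS : S.PosDef) : msqrt S * msqrt S = S ∧ (msqrt S)ᴴ = msqrt S := by
  classical
  have h := hS.posSemidef
  rw [msqrt, dif_pos h]
  have hU : (star h.1.eigenvectorUnitary : Matrix (Fin d) (Fin d) ℝ) * (h.1.eigenvectorUnitary : Matrix (Fin d) (Fin d) ℝ) = 1 :=
    Unitary.coe_star_mul_self _
  constructor
  · conv_rhs => rw [h.1.spectral_theorem, Unitary.conjStarAlgAut_apply]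
    have e : ∀ (U D V : Matrix (Fin d) (Fin d) ℝ), U * D * V * (U * D * V) = U * (D * (V * U) * D) * V := by
      intros; simp only [Matrix.mul_assoc]
    have hD : diagonal ((↑) ∘ (Real.sqrt ∘ h.1.eigenvalues)) * diagonal ((↑) ∘ (Real.sqrt ∘ h.1.eigenvalues)) =
        diagonal (RCLike.ofReal ∘ h.1.eigenvalues : Fin d → ℝ) := by
      rw [diagonal_mul_diagonal]
      congr 1
      funext i
      simp [Real.mul_self_sqrt (h.eigenvalues_nonneg i)]
    rw [e, hU, Matrix.mul_one, hD]
  · rw [conjTranspose_mul, conjTranspose_mul, diagonal_conjTranspose, ← star_eq_conjTranspose, ← star_eq_conjTranspose, star_star, Matrix.mul_assoc]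
    simp

/-- Assume `S := Bᵀ R₀⁻¹ B` is positive definite and set
`Ā := S^{1/2} A S^{−1/2}`.  Then:
(i) for every positive semidefinite `P`,
`𝓔(P) = S^{−1/2} (Ā (I + S^{1/2} P S^{1/2})⁻¹) S^{1/2}` and
`‖Ā (I + S^{1/2} P S^{1/2})⁻¹‖₂ ≤ ‖Ā‖₂`;
(ii) for any positive semidefinite `p₀, …, p_n`,
`‖𝓔(p_n) ⋯ 𝓔(p₁) 𝓔(p₀)‖₂ ≤ ‖S^{1/2}‖₂ ‖S^{−1/2}‖₂ ‖Ā‖₂^{n+1}`. -/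
theorem statement11 {d d₀ : ℕ} (hd : 1 ≤ d) (hd₀ : 1 ≤ d₀)
    (A : Matrix (Fin d) (Fin d) ℝ) (B : Matrix (Fin d₀) (Fin d) ℝ)
    (R₀ : Matrix (Fin d₀) (Fin d₀) ℝ) (hR₀ : R₀.PosDef)
    (S : Matrix (Fin d) (Fin d) ℝ) (hSdef : S = Bᵀ * R₀⁻¹ * B) (hS : S.PosDef)
    (Abar : Matrix (Fin d) (Fin d) ℝ) (hAbar : Abar = msqrt S * A * (msqrt S)⁻¹) :
    (∀ P : Matrix (Fin d) (Fin d) ℝ, P.PosSemidef →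
      Emat A S P = (msqrt S)⁻¹ * (Abar * (1 + msqrt S * P * msqrt S)⁻¹) * msqrt S ∧
      specNorm (Abar * (1 + msqrt S * P * msqrt S)⁻¹) ≤ specNorm Abar) ∧
    (∀ (n : ℕ) (p : ℕ → Matrix (Fin d) (Fin d) ℝ), (∀ k, k ≤ n → (p k).PosSemidef) →
      specNorm (Eprod A S p n) ≤
        specNorm (msqrt S) * specNorm ((msqrt S)⁻¹) * specNorm Abar ^ (n + 1)) := by
  classical
  set M : Matrix (Fin d) (Fin d) ℝ := msqrt S with hMdef
  have hMfacts : M * M = S ∧ Mᴴ = M := by rw [hMdef]; exact msqrt_facts S hS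
  have hMM : M * M = S := hMfacts.1
  have hMherm : Mᴴ = M := hMfacts.2
  have hSdet : IsUnit S.det := (Matrix.isUnit_iff_isUnit_det _).1 hS.isUnit
  have hMdet : IsUnit M.det := by
    have : IsUnit (M.det * M.det) := by rw [← Matrix.det_mul, hMM]; exact hSdet
    exact (IsUnit.mul_iff.mp this).1
  have hMiM : M⁻¹ * M = 1 := Matrix.nonsing_inv_mul _ hMdet
  have hMMi : M * M⁻¹ = 1 := Matrix.mul_nonsing_inv _ hMdet
  -- part (i)
  have hi : ∀ P : Matrix (Fin d) (Fin d) ℝ, P.PosSemidef →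
      Emat A S P = M⁻¹ * (Abar * (1 + M * P * M)⁻¹) * M ∧
      specNorm (Abar * (1 + M * P * M)⁻¹) ≤ specNorm Abar := by
    intro P hP
    have hQ : (M * P * M).PosSemidef := by
      have := hP.conjTranspose_mul_mul_same M
      rwa [hMherm] at this
    have key : 1 + P * S = M⁻¹ * (1 + M * P * M) * M := by
      have h1 : M⁻¹ * (1 + M * P * M) * M = M⁻¹ * M + M⁻¹ * M * P * (M * M) := by
        noncomm_ring
      rw [h1, hMiM, hMM, Matrix.one_mul]
    have hinv : (1 + P * S)⁻¹ = M⁻¹ * (1 + M * P * M)⁻¹ * M := by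
      rw [key, Matrix.mul_inv_rev, Matrix.mul_inv_rev,
        Matrix.nonsing_inv_nonsing_inv _ hMdet]
      simp only [Matrix.mul_assoc]
    constructor
    · rw [Emat, hinv, hAbar]
      have h2 : M⁻¹ * (M * A * M⁻¹ * (1 + M * P * M)⁻¹) * M =
          (M⁻¹ * M) * (A * (M⁻¹ * (1 + M * P * M)⁻¹ * M)) := by noncomm_ring
      rw [h2, hMiM, Matrix.one_mul, Matrix.mul_assoc, Matrix.mul_assoc]
    · calc specNorm (Abar * (1 + M * P * M)⁻¹)
          ≤ specNorm Abar * specNorm (1 + M * P * M)⁻¹ := specNorm_mul_le _ _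
        _ ≤ specNorm Abar * 1 :=
            mul_le_mul_of_nonneg_left (specNorm_inv_le_one hQ) (specNorm_nonneg _)
        _ = specNorm Abar := mul_one _
  refine ⟨hi, ?_⟩
  -- part (ii)
  have main : ∀ (n : ℕ) (p : ℕ → Matrix (Fin d) (Fin d) ℝ), (∀ k, k ≤ n → (p k).PosSemidef) →
      ∃ Y : Matrix (Fin d) (Fin d) ℝ, Eprod A S p n = M⁻¹ * Y * M ∧
        specNorm Y ≤ specNorm Abar ^ (n + 1) := by
    intro n
    induction n with
    | zero =>
      intro p hp
      obtain ⟨heq, hle⟩ := hi (p 0) (hp 0 le_rfl)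
      exact ⟨Abar * (1 + M * p 0 * M)⁻¹, heq, by simpa using hle⟩
    | succ n ih =>
      intro p hp
      obtain ⟨Y, hY, hYn⟩ := ih p (fun k hk => hp k (hk.trans (Nat.le_succ n)))
      obtain ⟨heq, hle⟩ := hi (p (n + 1)) (hp (n + 1) le_rfl)
      refine ⟨(Abar * (1 + M * p (n + 1) * M)⁻¹) * Y, ?_, ?_⟩
      · show Emat A S (p (n + 1)) * Eprod A S p n = _
        rw [hY, heq]
        have h3 : M⁻¹ * (Abar * (1 + M * p (n + 1) * M)⁻¹) * M * (M⁻¹ * Y * M) =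
            M⁻¹ * (Abar * (1 + M * p (n + 1) * M)⁻¹ * ((M * M⁻¹) * Y)) * M := by
          noncomm_ring
        rw [h3, hMMi, Matrix.one_mul, ← Matrix.mul_assoc]
      · calc specNorm (Abar * (1 + M * p (n + 1) * M)⁻¹ * Y)
            ≤ specNorm (Abar * (1 + M * p (n + 1) * M)⁻¹) * specNorm Y := specNorm_mul_le _ _
          _ ≤ specNorm Abar * specNorm Abar ^ (n + 1) :=
              mul_le_mul hle hYn (specNorm_nonneg _) (specNorm_nonneg _)
          _ = specNorm Abar ^ (n + 1 + 1) := by ring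
  intro n p hp
  obtain ⟨Y, hY, hYn⟩ := main n p hp
  calc specNorm (Eprod A S p n) = specNorm (M⁻¹ * Y * M) := by rw [hY]
    _ ≤ specNorm (M⁻¹ * Y) * specNorm M := specNorm_mul_le _ _
    _ ≤ specNorm M⁻¹ * specNorm Y * specNorm M :=
        mul_le_mul_of_nonneg_right (specNorm_mul_le _ _) (specNorm_nonneg _)
    _ ≤ specNorm M⁻¹ * specNorm Abar ^ (n + 1) * specNorm M := by
        apply mul_le_mul_of_nonneg_right _ (specNorm_nonneg _)
        exact mul_le_mul_of_nonneg_left hYn (specNorm_nonneg _)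
    _ = specNorm M * specNorm M⁻¹ * specNorm Abar ^ (n + 1) := by ring
end
end

section
/- Assume S is positive definite. Let p be a random d×d matrix on a probability space, almost surely positive definite and with integrable entries. Then E[p] is positive definite and E[A (I + p S)⁻¹ p Aᵀ] ≤ A (I + E[p] S)⁻¹ E[p] Aᵀ in Loewner order; consequently E[Φ(p)] ≤ Φ(E[p]). -/
open Matrix MeasureTheory

noncomputable section

/-- Entrywise expectation of a random matrix. -/
def matExp {Ω : Type} [MeasurableSpace Ω] (μ : Measure Ω) {m n : ℕ}
    (p : Ω → Matrix (Fin m) (Fin n) ℝ) : Matrix (Fin m) (Fin n) ℝ :=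
  Matrix.of fun i j => ∫ ω, p ω i j ∂μ

section Helpers

variable {d d₀ : ℕ}

lemma M_posdef (B : Matrix (Fin d₀) (Fin d) ℝ) {R₀ : Matrix (Fin d₀) (Fin d₀) ℝ}
    (hR₀ : R₀.PosDef) {P : Matrix (Fin d) (Fin d) ℝ} (hP : P.PosDef) :
    (B * P * Bᵀ + R₀).PosDef := by
  have h := hP.posSemidef.mul_mul_conjTranspose_same B
  rw [conjTranspose_eq_transpose_of_trivial] at h
  exact Matrix.PosDef.posSemidef_add h hR₀

lemma ric_eq {B : Matrix (Fin d₀) (Fin d) ℝ} {R₀ : Matrix (Fin d₀) (Fin d₀) ℝ}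
    {S : Matrix (Fin d) (Fin d) ℝ}
    (hR₀ : R₀.PosDef) (hSdef : S = Bᵀ * R₀⁻¹ * B) (hS : S.PosDef)
    {P : Matrix (Fin d) (Fin d) ℝ} (hP : P.PosDef) :
    (1 + P * S)⁻¹ * P = P - P * (Bᵀ * ((B * P * Bᵀ + R₀)⁻¹ * (B * P))) ∧
    (1 + P * S)⁻¹ * P = (P⁻¹ + S)⁻¹ := by
  have hMpd : (B * P * Bᵀ + R₀).PosDef := M_posdef B hR₀ hP
  have hMdet : IsUnit (B * P * Bᵀ + R₀).det := hMpd.det_pos.ne'.isUnit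
  have hPdet : IsUnit P.det := hP.det_pos.ne'.isUnit
  have hR₀det : IsUnit R₀.det := hR₀.det_pos.ne'.isUnit
  have hpi : P⁻¹ * P = 1 := Matrix.nonsing_inv_mul P hPdet
  have hr : R₀⁻¹ * R₀ = 1 := Matrix.nonsing_inv_mul R₀ hR₀det
  have hmmi : (B * P * Bᵀ + R₀) * (B * P * Bᵀ + R₀)⁻¹ = 1 :=
    Matrix.mul_nonsing_inv _ hMdet
  have e1 : (P⁻¹ + S) * (P * Bᵀ) = Bᵀ * (R₀⁻¹ * (B * P * Bᵀ + R₀)) := by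
    calc (P⁻¹ + S) * (P * Bᵀ) = (P⁻¹ * P) * Bᵀ + S * (P * Bᵀ) := by
          simp only [Matrix.add_mul, Matrix.mul_assoc]
      _ = Bᵀ * (R₀⁻¹ * R₀) + S * (P * Bᵀ) := by rw [hpi, hr, Matrix.one_mul, Matrix.mul_one]
      _ = Bᵀ * (R₀⁻¹ * (B * P * Bᵀ + R₀)) := by
          rw [hSdef]
          simp only [Matrix.mul_add, Matrix.add_mul, Matrix.mul_assoc]
          abel
  have key : (P⁻¹ + S) * (P - P * (Bᵀ * ((B * P * Bᵀ + R₀)⁻¹ * (B * P)))) = 1 := by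
    have expand : (P⁻¹ + S) * (P - P * (Bᵀ * ((B * P * Bᵀ + R₀)⁻¹ * (B * P))))
        = (P⁻¹ * P) + S * P
          - ((P⁻¹ + S) * (P * Bᵀ)) * ((B * P * Bᵀ + R₀)⁻¹ * (B * P)) := by
      simp only [Matrix.mul_sub, Matrix.add_mul, Matrix.sub_mul, Matrix.mul_assoc] <;> abel
    rw [expand, e1, hpi]
    have e2 : (Bᵀ * (R₀⁻¹ * (B * P * Bᵀ + R₀))) * ((B * P * Bᵀ + R₀)⁻¹ * (B * P))
        = Bᵀ * (R₀⁻¹ * (((B * P * Bᵀ + R₀) * (B * P * Bᵀ + R₀)⁻¹) * (B * P))) := by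
      simp only [Matrix.mul_assoc]
    rw [e2, hmmi, hSdef]
    simp only [Matrix.one_mul, Matrix.mul_assoc]
    abel
  have hTinv : (P⁻¹ + S)⁻¹ = P - P * (Bᵀ * ((B * P * Bᵀ + R₀)⁻¹ * (B * P))) :=
    Matrix.inv_eq_right_inv key
  have h1 : 1 + P * S = P * (P⁻¹ + S) := by
    rw [mul_add, Matrix.mul_nonsing_inv P hPdet]
  have h2 : (1 + P * S)⁻¹ * P = (P⁻¹ + S)⁻¹ := by
    rw [h1, Matrix.mul_inv_rev, Matrix.mul_assoc, Matrix.nonsing_inv_mul P hPdet, mul_one]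
  exact ⟨h2.trans hTinv, h2⟩

lemma square_eq (A : Matrix (Fin d) (Fin d) ℝ) (K : Matrix (Fin d) (Fin d₀) ℝ)
    {B : Matrix (Fin d₀) (Fin d) ℝ} {R₀ : Matrix (Fin d₀) (Fin d₀) ℝ}
    {S : Matrix (Fin d) (Fin d) ℝ}
    (hR₀ : R₀.PosDef) (hSdef : S = Bᵀ * R₀⁻¹ * B) (hS : S.PosDef)
    {P : Matrix (Fin d) (Fin d) ℝ} (hP : P.PosDef) :
    ((A - K * B) * P * (A - K * B)ᵀ + K * R₀ * Kᵀ) - A * ((1 + P * S)⁻¹ * P) * Aᵀ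
      = (K - A * (P * (Bᵀ * (B * P * Bᵀ + R₀)⁻¹))) * (B * P * Bᵀ + R₀) *
        (K - A * (P * (Bᵀ * (B * P * Bᵀ + R₀)⁻¹)))ᵀ := by
  have hMpd : (B * P * Bᵀ + R₀).PosDef := M_posdef B hR₀ hP
  have hMdet : IsUnit (B * P * Bᵀ + R₀).det := hMpd.det_pos.ne'.isUnit
  have hmmi : (B * P * Bᵀ + R₀) * (B * P * Bᵀ + R₀)⁻¹ = 1 :=
    Matrix.mul_nonsing_inv _ hMdet
  have hmim : (B * P * Bᵀ + R₀)⁻¹ * (B * P * Bᵀ + R₀) = 1 :=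
    Matrix.nonsing_inv_mul _ hMdet
  have hMsymm : (B * P * Bᵀ + R₀)ᵀ = B * P * Bᵀ + R₀ := by
    rw [← conjTranspose_eq_transpose_of_trivial]; exact hMpd.isHermitian
  have hMinvT : ((B * P * Bᵀ + R₀)⁻¹)ᵀ = (B * P * Bᵀ + R₀)⁻¹ := by
    rw [Matrix.transpose_nonsing_inv, hMsymm]
  have hPsymm : Pᵀ = P := by
    rw [← conjTranspose_eq_transpose_of_trivial]; exact hP.isHermitian
  have hXT : (K - A * (P * (Bᵀ * (B * P * Bᵀ + R₀)⁻¹)))ᵀ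
      = Kᵀ - (B * P * Bᵀ + R₀)⁻¹ * (B * (P * Aᵀ)) := by
    simp only [transpose_sub, transpose_mul, transpose_transpose]
    rw [hMinvT, hPsymm]
    simp only [Matrix.mul_assoc]
  have hKB : (A - K * B)ᵀ = Aᵀ - Bᵀ * Kᵀ := by
    simp only [transpose_sub, transpose_mul]
  rw [hXT, (ric_eq hR₀ hSdef hS hP).1, hKB]
  have e : (K - A * (P * (Bᵀ * (B * P * Bᵀ + R₀)⁻¹))) * (B * P * Bᵀ + R₀) *
        (Kᵀ - (B * P * Bᵀ + R₀)⁻¹ * (B * (P * Aᵀ)))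
      = K * ((B * P * Bᵀ + R₀) * Kᵀ)
        - K * (((B * P * Bᵀ + R₀) * (B * P * Bᵀ + R₀)⁻¹) * (B * (P * Aᵀ)))
        - A * (P * (Bᵀ * (((B * P * Bᵀ + R₀)⁻¹ * (B * P * Bᵀ + R₀)) * Kᵀ)))
        + A * (P * (Bᵀ * (((B * P * Bᵀ + R₀)⁻¹ * (B * P * Bᵀ + R₀)) *
            ((B * P * Bᵀ + R₀)⁻¹ * (B * (P * Aᵀ)))))) := by
    simp only [Matrix.mul_sub, Matrix.sub_mul, Matrix.mul_add, Matrix.add_mul,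
      Matrix.mul_assoc]
    abel
  rw [e, hmmi, hmim]
  simp only [Matrix.one_mul, Matrix.mul_add, Matrix.add_mul, Matrix.mul_sub,
    Matrix.sub_mul, Matrix.mul_assoc]
  abel

lemma psd_entry_bound {n : ℕ} {G : Matrix (Fin n) (Fin n) ℝ} (hG : G.PosSemidef)
    (k l : Fin n) : |G k l| ≤ (G k k + G l l) / 2 := by
  have hsym : G l k = G k l := by
    have := hG.isHermitian.apply k l
    simpa using this
  have key : ∀ c : ℝ, 0 ≤ G k k + c * G k l + c * G l k + c * c * G l l := by
    intro c
    have h := hG.dotProduct_mulVec_nonneg ((Pi.single k (1:ℝ) + Pi.single l c : Fin n → ℝ))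
    have hstar : star ((Pi.single k (1:ℝ) + Pi.single l c : Fin n → ℝ))
        = ((Pi.single k (1:ℝ) + Pi.single l c : Fin n → ℝ)) := by funext i; simp
    rw [hstar] at h
    have hq : ((Pi.single k (1:ℝ) + Pi.single l c : Fin n → ℝ)) ⬝ᵥ
        G *ᵥ ((Pi.single k (1:ℝ) + Pi.single l c : Fin n → ℝ))
        = G k k + c * G k l + c * G l k + c * c * G l l := by
      rw [mulVec_add, mulVec_single, mulVec_single, dotProduct_add, add_dotProduct,
        add_dotProduct, single_dotProduct, single_dotProduct, single_dotProduct,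
        single_dotProduct]
      simp only [Pi.smul_apply, Matrix.col_apply, op_smul_eq_mul]
      ring
    rw [hq] at h
    exact h
  have h1 := key 1
  have h2 := key (-1)
  rw [hsym] at h1 h2
  rw [abs_le]
  constructor <;> nlinarith

lemma psd_diag_nonneg {n : ℕ} {G : Matrix (Fin n) (Fin n) ℝ} (hG : G.PosSemidef)
    (k : Fin n) : 0 ≤ G k k := by
  have h := psd_entry_bound hG k k
  have h0 := abs_nonneg (G k k)
  nlinarith

variable {Ω : Type} [MeasurableSpace Ω] {μ : Measure Ω}

lemma measurable_det {n : ℕ} {f : Ω → Matrix (Fin n) (Fin n) ℝ}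
    (hf : ∀ i j, Measurable fun ω => f ω i j) :
    Measurable fun ω => (f ω).det := by
  simp_rw [Matrix.det_apply']
  refine Finset.measurable_sum _ fun σ _ => ?_
  exact (Finset.measurable_prod _ fun i _ => hf (σ i) i).const_mul _

lemma measurable_inv_entry {n : ℕ} {f : Ω → Matrix (Fin n) (Fin n) ℝ}
    (hf : ∀ i j, Measurable fun ω => f ω i j) (i j : Fin n) :
    Measurable fun ω => (f ω)⁻¹ i j := by
  simp_rw [Matrix.inv_def, Matrix.smul_apply, smul_eq_mul, Ring.inverse_eq_inv]
  refine ((measurable_det hf).inv).mul ?_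
  simp_rw [Matrix.adjugate_apply]
  refine measurable_det fun k l => ?_
  simp_rw [Matrix.updateRow_apply]
  by_cases hk : k = j <;> simp [hk, hf k l]

lemma quad_integrable {n : ℕ} {g : Ω → Matrix (Fin n) (Fin n) ℝ}
    (hg : ∀ i j, Integrable (fun ω => g ω i j) μ) (x : Fin n → ℝ) :
    Integrable (fun ω => x ⬝ᵥ (g ω *ᵥ x)) μ := by
  have he : ∀ ω, x ⬝ᵥ (g ω *ᵥ x) = ∑ i, ∑ j, x i * (g ω i j * x j) := by
    intro ω; simp [dotProduct, mulVec, Finset.mul_sum]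
  simp_rw [he]
  exact integrable_finset_sum _ fun i _ =>
    integrable_finset_sum _ fun j _ => (((hg i j).mul_const (x j)).const_mul (x i))

lemma integral_quadForm {n : ℕ} {g : Ω → Matrix (Fin n) (Fin n) ℝ}
    (hg : ∀ i j, Integrable (fun ω => g ω i j) μ) (x : Fin n → ℝ) :
    ∫ ω, x ⬝ᵥ (g ω *ᵥ x) ∂μ = x ⬝ᵥ (matExp μ g *ᵥ x) := by
  have he : ∀ (N : Matrix (Fin n) (Fin n) ℝ), x ⬝ᵥ (N *ᵥ x)
      = ∑ i, ∑ j, x i * (N i j * x j) := by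
    intro N; simp [dotProduct, mulVec, Finset.mul_sum]
  simp_rw [he]
  rw [integral_finset_sum _ fun i _ => integrable_finset_sum _ fun j _ =>
    ((hg i j).mul_const (x j)).const_mul (x i)]
  refine Finset.sum_congr rfl fun i _ => ?_
  rw [integral_finset_sum _ fun j _ => ((hg i j).mul_const (x j)).const_mul (x i)]
  refine Finset.sum_congr rfl fun j _ => ?_
  rw [integral_const_mul, integral_mul_const]
  rfl

lemma matExp_isHermitian {n : ℕ} {g : Ω → Matrix (Fin n) (Fin n) ℝ}
    (hherm : ∀ᵐ ω ∂μ, (g ω).IsHermitian) : (matExp μ g).IsHermitian := by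
  refine Matrix.IsHermitian.ext fun i j => ?_
  show star ((matExp μ g) j i) = (matExp μ g) i j
  rw [star_trivial]
  exact integral_congr_ae <| hherm.mono fun ω h => by
    have := h.apply i j; simpa using this

lemma matExp_posSemidef {n : ℕ} {g : Ω → Matrix (Fin n) (Fin n) ℝ}
    (hg : ∀ i j, Integrable (fun ω => g ω i j) μ)
    (hpsd : ∀ᵐ ω ∂μ, (g ω).PosSemidef) : (matExp μ g).PosSemidef := by
  refine .of_dotProduct_mulVec_nonneg (matExp_isHermitian (hpsd.mono fun ω h => h.isHermitian)) fun x => ?_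
  have hs : star x = x := by funext i; simp
  rw [hs, ← integral_quadForm hg x]
  refine integral_nonneg_of_ae (hpsd.mono fun ω h => ?_)
  have := h.dotProduct_mulVec_nonneg x
  rwa [hs] at this

lemma matExp_posDef [IsProbabilityMeasure μ] {n : ℕ} {g : Ω → Matrix (Fin n) (Fin n) ℝ}
    (hg : ∀ i j, Integrable (fun ω => g ω i j) μ)
    (hpd : ∀ᵐ ω ∂μ, (g ω).PosDef) : (matExp μ g).PosDef := by
  refine .of_dotProduct_mulVec_pos (matExp_isHermitian (hpd.mono fun ω h => h.isHermitian)) fun x hx => ?_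
  have hs : star x = x := by funext i; simp
  rw [hs, ← integral_quadForm hg x]
  have hqpos : ∀ᵐ ω ∂μ, 0 < x ⬝ᵥ (g ω *ᵥ x) := hpd.mono fun ω h => by
    have := h.dotProduct_mulVec_pos hx; rwa [hs] at this
  rw [integral_pos_iff_support_of_nonneg_ae
    (hqpos.mono fun ω h => le_of_lt h) (quad_integrable hg x)]
  by_contra h0
  push_neg at h0
  have hz : μ (Function.support fun ω => x ⬝ᵥ (g ω *ᵥ x)) = 0 :=
    le_antisymm h0 (by simp)
  have hmem : ∀ᵐ ω ∂μ, ω ∈ Function.support fun ω => x ⬝ᵥ (g ω *ᵥ x) :=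
    hqpos.mono fun ω h => ne_of_gt h
  have hc : μ (Function.support fun ω => x ⬝ᵥ (g ω *ᵥ x))ᶜ = 0 := by
    have := ae_iff.mp hmem
    simpa [Set.compl_def] using this
  have : (1 : ENNReal) ≤ 0 := by
    calc (1 : ENNReal) = μ Set.univ := (measure_univ).symm
    _ ≤ μ (Function.support fun ω => x ⬝ᵥ (g ω *ᵥ x))
        + μ (Function.support fun ω => x ⬝ᵥ (g ω *ᵥ x))ᶜ := by
          rw [← Set.union_compl_self (Function.support fun ω => x ⬝ᵥ (g ω *ᵥ x))]
          exact measure_union_le _ _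
    _ = 0 := by rw [hz, hc, add_zero]
  simp at this

lemma matExp_mono {n : ℕ} {f h : Ω → Matrix (Fin n) (Fin n) ℝ}
    (hf : ∀ i j, Integrable (fun ω => f ω i j) μ)
    (hh : ∀ i j, Integrable (fun ω => h ω i j) μ)
    (hle : ∀ᵐ ω ∂μ, (h ω - f ω).PosSemidef) :
    (matExp μ h - matExp μ f).PosSemidef := by
  have he : matExp μ h - matExp μ f = matExp μ (fun ω => h ω - f ω) := by
    ext i j
    show matExp μ h i j - matExp μ f i j = ∫ ω, (h ω - f ω) i j ∂μ
    simp only [Matrix.sub_apply]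
    rw [integral_sub (hh i j) (hf i j)]
    rfl
  rw [he]
  exact matExp_posSemidef (fun i j => (hh i j).sub (hf i j)) hle

lemma entry_integrable {n m : ℕ} (C : Matrix (Fin n) (Fin m) ℝ)
    (D : Matrix (Fin m) (Fin n) ℝ) {g : Ω → Matrix (Fin m) (Fin m) ℝ}
    (hg : ∀ i j, Integrable (fun ω => g ω i j) μ) (i j : Fin n) :
    Integrable (fun ω => (C * g ω * D) i j) μ := by
  have he : ∀ ω, (C * g ω * D) i j = ∑ l, ∑ k, (C i k * g ω k l) * D l j := by
    intro ω; simp [Matrix.mul_apply, Finset.sum_mul]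
  simp_rw [he]
  exact integrable_finset_sum _ fun l _ => integrable_finset_sum _ fun k _ =>
    ((hg k l).const_mul (C i k)).mul_const (D l j)

lemma matExp_affine [IsProbabilityMeasure μ] {n m : ℕ} (C : Matrix (Fin n) (Fin m) ℝ)
    (D : Matrix (Fin m) (Fin n) ℝ) (E : Matrix (Fin n) (Fin n) ℝ)
    {g : Ω → Matrix (Fin m) (Fin m) ℝ}
    (hg : ∀ i j, Integrable (fun ω => g ω i j) μ) :
    matExp μ (fun ω => C * g ω * D + E) = C * matExp μ g * D + E := by
  ext i j
  show ∫ ω, (C * g ω * D + E) i j ∂μ = (C * matExp μ g * D + E) i j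
  have he : ∀ (N : Matrix (Fin m) (Fin m) ℝ), (C * N * D + E) i j
      = (∑ l, ∑ k, (C i k * N k l) * D l j) + E i j := by
    intro N
    simp [Matrix.mul_apply, Matrix.add_apply, Finset.sum_mul]
  simp_rw [he]
  rw [integral_add (integrable_finset_sum _ fun l _ => integrable_finset_sum _ fun k _ =>
      ((hg k l).const_mul (C i k)).mul_const (D l j)) (integrable_const _)]
  rw [integral_finset_sum _ fun l _ => integrable_finset_sum _ fun k _ =>
      ((hg k l).const_mul (C i k)).mul_const (D l j)]
  congr 1
  · refine Finset.sum_congr rfl fun l _ => ?_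
    rw [integral_finset_sum _ fun k _ => ((hg k l).const_mul (C i k)).mul_const (D l j)]
    refine Finset.sum_congr rfl fun k _ => ?_
    rw [integral_mul_const, integral_const_mul]
    rfl
  · simp

end Helpers

/-- Assume `S := Bᵀ R₀⁻¹ B` is positive definite.  Let `p` be a
random `d×d` matrix, almost surely positive definite with integrable entries.  Then
`E[p]` is positive definite and `E[A (I + p S)⁻¹ p Aᵀ] ≤ A (I + E[p] S)⁻¹ E[p] Aᵀ` in
the Loewner order; consequently `E[Φ(p)] ≤ Φ(E[p])` for the Riccati map
`Φ(P) := A (I + P S)⁻¹ P Aᵀ + R`. -/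
theorem statement14 {d d₀ : ℕ} (hd : 1 ≤ d) (hd₀ : 1 ≤ d₀)
    (A : Matrix (Fin d) (Fin d) ℝ) (B : Matrix (Fin d₀) (Fin d) ℝ)
    (R : Matrix (Fin d) (Fin d) ℝ) (R₀ : Matrix (Fin d₀) (Fin d₀) ℝ)
    (hR : R.PosDef) (hR₀ : R₀.PosDef)
    (S : Matrix (Fin d) (Fin d) ℝ) (hSdef : S = Bᵀ * R₀⁻¹ * B) (hS : S.PosDef)
    (Φ : Matrix (Fin d) (Fin d) ℝ → Matrix (Fin d) (Fin d) ℝ)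
    (hΦ : ∀ Q, Φ Q = A * (1 + Q * S)⁻¹ * Q * Aᵀ + R)
    (Ω : Type) [MeasurableSpace Ω] (μ : Measure Ω) [IsProbabilityMeasure μ]
    (p : Ω → Matrix (Fin d) (Fin d) ℝ) (hmeas : ∀ i j, Measurable (fun ω => p ω i j))
    (hpd : ∀ᵐ ω ∂μ, (p ω).PosDef)
    (hint : ∀ i j, Integrable (fun ω => p ω i j) μ) :
    (matExp μ p).PosDef ∧
    (A * (1 + matExp μ p * S)⁻¹ * matExp μ p * Aᵀ -
      matExp μ (fun ω => A * (1 + p ω * S)⁻¹ * p ω * Aᵀ)).PosSemidef ∧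
    (Φ (matExp μ p) - matExp μ (fun ω => Φ (p ω))).PosSemidef := by
  have hQpd : (matExp μ p).PosDef := matExp_posDef hint hpd
  set Q : Matrix (Fin d) (Fin d) ℝ := matExp μ p with hQdef
  set K₀ : Matrix (Fin d) (Fin d₀) ℝ := A * (Q * (Bᵀ * (B * Q * Bᵀ + R₀)⁻¹)) with hK₀def
  -- measurability of entries of the inner matrix (1 + p ω S)⁻¹ p ω
  have hmeas1 : ∀ i j, Measurable fun ω => (1 + p ω * S) i j := by
    intro i j
    simp_rw [Matrix.add_apply, Matrix.mul_apply]
    exact measurable_const.add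
      (Finset.measurable_sum _ fun k _ => (hmeas i k).mul_const _)
  have hmeas_inv : ∀ i j, Measurable fun ω => (1 + p ω * S)⁻¹ i j :=
    measurable_inv_entry hmeas1
  have hmeas_gm : ∀ i j, Measurable fun ω => ((1 + p ω * S)⁻¹ * p ω) i j := by
    intro i j
    simp_rw [Matrix.mul_apply]
    exact Finset.measurable_sum _ fun k _ => (hmeas_inv i k).mul (hmeas k j)
  -- a.e. structure: (1+pS)⁻¹p is psd and ≤ p
  have hfacts : ∀ᵐ ω ∂μ, ((1 + p ω * S)⁻¹ * p ω).PosSemidef ∧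
      (p ω - (1 + p ω * S)⁻¹ * p ω).PosSemidef := by
    filter_upwards [hpd] with ω hω
    constructor
    · rw [(ric_eq hR₀ hSdef hS hω).2]
      exact (Matrix.PosDef.inv (hω.inv.add_posSemidef hS.posSemidef)).posSemidef
    · rw [(ric_eq hR₀ hSdef hS hω).1, sub_sub_cancel]
      have hMpd := M_posdef B hR₀ hω
      have hPsymm : (p ω)ᵀ = p ω := by
        rw [← conjTranspose_eq_transpose_of_trivial]; exact hω.isHermitian
      have h1 := hMpd.inv.posSemidef.mul_mul_conjTranspose_same (p ω * Bᵀ)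
      rw [conjTranspose_eq_transpose_of_trivial, transpose_mul, transpose_transpose,
        hPsymm] at h1
      have he : p ω * (Bᵀ * ((B * p ω * Bᵀ + R₀)⁻¹ * (B * p ω)))
          = p ω * Bᵀ * (B * p ω * Bᵀ + R₀)⁻¹ * (B * p ω) := by
        simp only [Matrix.mul_assoc]
      rw [he]
      exact h1
  -- integrability of entries of (1+pS)⁻¹p
  have hint_gm : ∀ k l, Integrable (fun ω => ((1 + p ω * S)⁻¹ * p ω) k l) μ := by
    intro k l
    refine Integrable.mono' (g := fun ω => (p ω k k + p ω l l) / 2)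
      (((hint k k).add (hint l l)).div_const 2)
      ((hmeas_gm k l).aestronglyMeasurable) ?_
    filter_upwards [hfacts] with ω hω
    obtain ⟨h1, h2⟩ := hω
    rw [Real.norm_eq_abs]
    have hb := psd_entry_bound h1 k l
    have hkk : ((1 + p ω * S)⁻¹ * p ω) k k ≤ p ω k k := by
      have := psd_diag_nonneg h2 k
      simp only [Matrix.sub_apply] at this
      linarith
    have hll : ((1 + p ω * S)⁻¹ * p ω) l l ≤ p ω l l := by
      have := psd_diag_nonneg h2 l
      simp only [Matrix.sub_apply] at this
      linarith
    linarith
  -- integrability of entries of f and h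
  have hint_f : ∀ i j,
      Integrable (fun ω => (A * (1 + p ω * S)⁻¹ * p ω * Aᵀ) i j) μ := by
    intro i j
    have heq : (fun ω => (A * (1 + p ω * S)⁻¹ * p ω * Aᵀ) i j)
        = fun ω => (A * ((1 + p ω * S)⁻¹ * p ω) * Aᵀ) i j := by
      funext ω
      rw [show A * (1 + p ω * S)⁻¹ * p ω * Aᵀ = A * ((1 + p ω * S)⁻¹ * p ω) * Aᵀ from by
        simp only [Matrix.mul_assoc]]
    rw [heq]
    exact entry_integrable A Aᵀ hint_gm i j
  have hint_h : ∀ i j, Integrable (fun ω =>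
      ((A - K₀ * B) * p ω * (A - K₀ * B)ᵀ + K₀ * R₀ * K₀ᵀ) i j) μ := by
    intro i j
    simp_rw [Matrix.add_apply]
    exact (entry_integrable (A - K₀ * B) (A - K₀ * B)ᵀ hint i j).add (integrable_const _)
  -- a.e. gap inequality
  have hgap : ∀ᵐ ω ∂μ,
      (((A - K₀ * B) * p ω * (A - K₀ * B)ᵀ + K₀ * R₀ * K₀ᵀ)
        - A * (1 + p ω * S)⁻¹ * p ω * Aᵀ).PosSemidef := by
    filter_upwards [hpd] with ω hω
    have hsq := square_eq A K₀ hR₀ hSdef hS hω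
    have hpsd := (M_posdef B hR₀ hω).posSemidef.mul_mul_conjTranspose_same
      (K₀ - A * (p ω * (Bᵀ * (B * p ω * Bᵀ + R₀)⁻¹)))
    rw [conjTranspose_eq_transpose_of_trivial] at hpsd
    have he : ((A - K₀ * B) * p ω * (A - K₀ * B)ᵀ + K₀ * R₀ * K₀ᵀ)
        - A * (1 + p ω * S)⁻¹ * p ω * Aᵀ
        = ((A - K₀ * B) * p ω * (A - K₀ * B)ᵀ + K₀ * R₀ * K₀ᵀ)
          - A * ((1 + p ω * S)⁻¹ * p ω) * Aᵀ := by
      rw [show A * (1 + p ω * S)⁻¹ * p ω * Aᵀ = A * ((1 + p ω * S)⁻¹ * p ω) * Aᵀ from by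
        simp only [Matrix.mul_assoc]]
    rw [he, hsq]
    exact hpsd
  -- optimality: equality at Q
  have hopt : (A - K₀ * B) * Q * (A - K₀ * B)ᵀ + K₀ * R₀ * K₀ᵀ
      = A * ((1 + Q * S)⁻¹ * Q) * Aᵀ := by
    have hsq := square_eq A K₀ hR₀ hSdef hS hQpd
    rw [show K₀ - A * (Q * (Bᵀ * (B * Q * Bᵀ + R₀)⁻¹)) = 0 from sub_self _] at hsq
    simp only [Matrix.zero_mul, Matrix.transpose_zero, Matrix.mul_zero] at hsq
    exact sub_eq_zero.mp hsq
  -- expectation of the affine majorant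
  have hEh : matExp μ (fun ω => (A - K₀ * B) * p ω * (A - K₀ * B)ᵀ + K₀ * R₀ * K₀ᵀ)
      = (A - K₀ * B) * Q * (A - K₀ * B)ᵀ + K₀ * R₀ * K₀ᵀ :=
    matExp_affine (A - K₀ * B) (A - K₀ * B)ᵀ (K₀ * R₀ * K₀ᵀ) hint
  -- part 2
  have hpart2 : (A * (1 + Q * S)⁻¹ * Q * Aᵀ -
      matExp μ (fun ω => A * (1 + p ω * S)⁻¹ * p ω * Aᵀ)).PosSemidef := by
    have hmono := matExp_mono hint_f hint_h hgap
    rw [hEh, hopt] at hmono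
    rw [show A * (1 + Q * S)⁻¹ * Q * Aᵀ = A * ((1 + Q * S)⁻¹ * Q) * Aᵀ from by
      simp only [Matrix.mul_assoc]]
    exact hmono
  refine ⟨hQpd, hpart2, ?_⟩
  -- part 3
  have hΦp : (fun ω => Φ (p ω))
      = fun ω => A * (1 + p ω * S)⁻¹ * p ω * Aᵀ + R := funext fun ω => hΦ (p ω)
  have hER : matExp μ (fun ω => A * (1 + p ω * S)⁻¹ * p ω * Aᵀ + R)
      = matExp μ (fun ω => A * (1 + p ω * S)⁻¹ * p ω * Aᵀ) + R := by
    ext i j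
    show ∫ ω, (A * (1 + p ω * S)⁻¹ * p ω * Aᵀ + R) i j ∂μ = _
    simp only [Matrix.add_apply]
    rw [integral_add (hint_f i j) (integrable_const _), integral_const]
    simp [measure_univ]
    rfl
  rw [hΦ, hΦp, hER]
  have : A * (1 + Q * S)⁻¹ * Q * Aᵀ + R -
      (matExp μ (fun ω => A * (1 + p ω * S)⁻¹ * p ω * Aᵀ) + R)
      = A * (1 + Q * S)⁻¹ * Q * Aᵀ -
        matExp μ (fun ω => A * (1 + p ω * S)⁻¹ * p ω * Aᵀ) := by
    abel
  rw [this]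
  exact hpart2
end
end
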